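/- Let d ∈ ℝ. There exist δ0 > 0, r > 0, and functions q1, q2 : (0, δ0) → ℝ with q2(δ) < 0 < q1(δ) and q1(δ) → 0, q2(δ) → 0 as δ → 0⁺, such that for every δ ∈ (0, δ0) the set of solutions q ∈ (−r, r) of the equation q²(1 + d·q) = δ is exactly {q1(δ), q2(δ)}, and moreover (q1(δ)² − q2(δ)²)/δ^{3/2} → −2d as δ → 0⁺. -/

import Mathlib

open Filter
open Set

section helpers


private lemma one_add_bd (d r q : ℝ) (hdr : 2 * |d| * r ≤ 1) (hq : |q| ≤ r) :
    (1:ℝ)/2 ≤ 1 + d*q := by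
  have h1 : -|d*q| ≤ d*q := neg_abs_le _
  have h2 : |d*q| = |d| * |q| := abs_mul d q
  have h3 : |d| * |q| ≤ |d| * r := mul_le_mul_of_nonneg_left hq (abs_nonneg d)
  linarith

private lemma one_add_bd' (d r q : ℝ) (hdr : 2 * |d| * r < 1) (hq : |q| ≤ r) :
    (1:ℝ)/2 < 1 + d*q := by
  have h1 : -|d*q| ≤ d*q := neg_abs_le _
  have h2 : |d*q| = |d| * |q| := abs_mul d q
  have h3 : |d| * |q| ≤ |d| * r := mul_le_mul_of_nonneg_left hq (abs_nonneg d)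
  linarith

private lemma monoF (d r : ℝ) (hr : 0 < r) (hdr : 2 * |d| * r ≤ 1) :
    StrictMonoOn (fun q : ℝ => q^2*(1+d*q)) (Icc 0 r) := by
  intro x hx y hy hxy
  obtain ⟨hx0, hxr⟩ := hx; obtain ⟨hy0, hyr⟩ := hy
  simp only
  have hxy0 : 0 < x + y := by nlinarith
  have hlt2r : x + y < 2*r := by nlinarith
  have hX : 0 ≤ x^2 + x*y + y^2 := by nlinarith
  have hXle : x^2 + x*y + y^2 ≤ (x+y)^2 := by nlinarith
  have h1 : -(|d| * (x^2+x*y+y^2)) ≤ d*(x^2+x*y+y^2) := by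
    have := neg_abs_le (d*(x^2+x*y+y^2))
    rw [abs_mul, abs_of_nonneg hX] at this; exact this
  have h2 : |d| * (x^2+x*y+y^2) ≤ |d| * (x+y)^2 := mul_le_mul_of_nonneg_left hXle (abs_nonneg d)
  have h3 : |d| * (x+y)^2 ≤ |d| * (2*r)*(x+y) := by
    nlinarith [mul_nonneg (abs_nonneg d) (mul_nonneg hxy0.le (sub_pos.2 hlt2r).le)]
  have hB : 0 < (x+y) + d*(x^2+x*y+y^2) := by
    rcases eq_or_lt_of_le (abs_nonneg d) with h | h
    · nlinarith
    · nlinarith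
  nlinarith [mul_pos (sub_pos.2 hxy) hB]

private lemma antiF (d r : ℝ) (hr : 0 < r) (hdr : 2 * |d| * r ≤ 1) :
    StrictAntiOn (fun q : ℝ => q^2*(1+d*q)) (Icc (-r) 0) := by
  intro x hx y hy hxy
  obtain ⟨hx0, hxr⟩ := hx; obtain ⟨hy0, hyr⟩ := hy
  simp only
  have hxy0 : x + y < 0 := by nlinarith
  have hlt2r : -(2*r) < x + y := by nlinarith
  have hX : 0 ≤ x^2 + x*y + y^2 := by nlinarith
  have hXle : x^2 + x*y + y^2 ≤ (x+y)^2 := by nlinarith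
  have h1 : d*(x^2+x*y+y^2) ≤ |d| * (x^2+x*y+y^2) := by
    have := le_abs_self (d*(x^2+x*y+y^2))
    rw [abs_mul, abs_of_nonneg hX] at this; exact this
  have h2 : |d| * (x^2+x*y+y^2) ≤ |d| * (x+y)^2 := mul_le_mul_of_nonneg_left hXle (abs_nonneg d)
  have h3 : |d| * (x+y)^2 ≤ |d| * (2*r)*(-(x+y)) := by
    nlinarith [mul_nonneg (abs_nonneg d) (mul_nonneg (neg_nonneg.2 hxy0.le) (by linarith : (0:ℝ) ≤ 2*r + (x+y)))]
  have hB : (x+y) + d*(x^2+x*y+y^2) < 0 := by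
    rcases eq_or_lt_of_le (abs_nonneg d) with h | h
    · nlinarith
    · nlinarith
  nlinarith [mul_pos (sub_pos.2 hxy) (neg_pos.2 hB)]

private lemma cusp_key (d δ a b : ℝ) (hδ : 0 < δ) (ha : 0 < a) (hb : b < 0)
    (h1a : 0 < 1 + d*a) (h1b : 0 < 1 + d*b)
    (ea : a^2*(1+d*a) = δ) (eb : b^2*(1+d*b) = δ) :
    (a^2 - b^2)/δ^((3:ℝ)/2)
      = -d * (1/Real.sqrt (1+d*a) + 1/Real.sqrt (1+d*b)) / ((1+d*a)*(1+d*b)) := by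
  set s := Real.sqrt δ with hsdef
  set sa := Real.sqrt (1+d*a) with hsadef
  set sb := Real.sqrt (1+d*b) with hsbdef
  have hs : 0 < s := Real.sqrt_pos.2 hδ
  have hsa : 0 < sa := Real.sqrt_pos.2 h1a
  have hsb : 0 < sb := Real.sqrt_pos.2 h1b
  have hs2 : s^2 = δ := Real.sq_sqrt hδ.le
  have hsa2 : sa^2 = 1 + d*a := Real.sq_sqrt h1a.le
  have hsb2 : sb^2 = 1 + d*b := Real.sq_sqrt h1b.le
  have hp : δ ^ ((3:ℝ)/2) = s^3 := by
    rw [hsdef, Real.sqrt_eq_rpow, ← Real.rpow_natCast (δ ^ ((1:ℝ)/2)) 3,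
      ← Real.rpow_mul hδ.le]
    norm_num
  have haa : a * sa = s := by
    have h2 : (a*sa - s)*(a*sa + s) = 0 := by
      have : (a*sa)^2 = s^2 := by rw [hs2, mul_pow, hsa2]; exact ea
      linear_combination this
    rcases mul_eq_zero.1 h2 with h | h
    · linarith
    · nlinarith [mul_pos ha hsa]
  have hbb : b * sb = -s := by
    have h2 : (b*sb + s)*(b*sb - s) = 0 := by
      have : (b*sb)^2 = s^2 := by rw [hs2, mul_pow, hsb2]; exact eb
      linear_combination this
    rcases mul_eq_zero.1 h2 with h | h
    · linarith
    · nlinarith [mul_pos_of_neg_of_neg hb (neg_neg_iff_pos.2 hsb)]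
  have stepA : a^2 - b^2 = d*(b-a)*δ / ((1+d*a)*(1+d*b)) := by
    rw [eq_div_iff (by positivity)]
    linear_combination (1+d*b)*ea - (1+d*a)*eb
  have stepB : b - a = -(s*(1/sa + 1/sb)) := by
    field_simp
    linear_combination sa*hbb - sb*haa
  rw [hp, stepA, ← hs2, ← hsa2, ← hsb2, stepB]
  field_simp

end helpers

/-- normal form of the cuspidal ω1-ω2 bifurcation: the equation
`q²(1 + dq) = δ` has, for small `δ > 0`, exactly two small solutions
`q2(δ) < 0 < q1(δ)`, both tending to `0`, and
`(q1(δ)² - q2(δ)²)/δ^{3/2} → -2d` as `δ → 0⁺`. -/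
theorem cusp_normal_form (d : ℝ) :
    ∃ δ0 > 0, ∃ r > 0, ∃ q1 q2 : ℝ → ℝ,
      (∀ δ ∈ Set.Ioo (0 : ℝ) δ0, q2 δ < 0 ∧ 0 < q1 δ) ∧
      Tendsto q1 (nhdsWithin 0 (Set.Ioi (0 : ℝ))) (nhds 0) ∧
      Tendsto q2 (nhdsWithin 0 (Set.Ioi (0 : ℝ))) (nhds 0) ∧
      (∀ δ ∈ Set.Ioo (0 : ℝ) δ0,
        {q : ℝ | q ∈ Set.Ioo (-r) r ∧ q^2 * (1 + d * q) = δ} = {q1 δ, q2 δ}) ∧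
      Tendsto (fun δ : ℝ => ((q1 δ)^2 - (q2 δ)^2) / δ ^ ((3:ℝ)/2))
        (nhdsWithin 0 (Set.Ioi (0 : ℝ))) (nhds (-2 * d)) := by
  set F : ℝ → ℝ := fun q => q^2*(1+d*q) with hFdef
  set r : ℝ := (2*(|d|+1))⁻¹ with hrdef
  have hr : 0 < r := by positivity
  have hdr : 2 * |d| * r ≤ 1 := by
    have h1 : r * (2*(|d|+1)) = 1 := inv_mul_cancel₀ (by positivity)
    nlinarith [abs_nonneg d, hr]
  have hdrs : 2 * |d| * r < 1 := by
    have h1 : r * (2*(|d|+1)) = 1 := inv_mul_cancel₀ (by positivity)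
    nlinarith [abs_nonneg d, hr]
  set δ0 : ℝ := r^2/2 with hδ0def
  have hδ0 : 0 < δ0 := by positivity
  have hFr : δ0 < F r := by
    have := one_add_bd' d r r hdrs (by rw [abs_of_pos hr])
    have h2 : r^2/2 < r^2 * (1+d*r) := by nlinarith
    simpa [hFdef] using h2
  have hFnr : δ0 < F (-r) := by
    have := one_add_bd' d r (-r) hdrs (by rw [abs_neg, abs_of_pos hr])
    have h2 : r^2/2 < (-r)^2 * (1+d*(-r)) := by nlinarith
    simpa [hFdef] using h2
  have hFcont : Continuous F := by fun_prop
  have ex1 : ∀ δ : ℝ, δ ∈ Ioo 0 δ0 → ∃ q, q ∈ Ioo 0 r ∧ F q = δ := by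
    intro δ hδ
    have h0 : F 0 = 0 := by simp [hFdef]
    have : δ ∈ Ioo (F 0) (F r) := by rw [h0]; exact ⟨hδ.1, hδ.2.trans hFr⟩
    obtain ⟨q, hq, hfq⟩ := intermediate_value_Ioo hr.le hFcont.continuousOn this
    exact ⟨q, hq, hfq⟩
  have ex2 : ∀ δ : ℝ, δ ∈ Ioo 0 δ0 → ∃ q, q ∈ Ioo (-r) 0 ∧ F q = δ := by
    intro δ hδ
    have h0 : F 0 = 0 := by simp [hFdef]
    have : δ ∈ Ioo (F 0) (F (-r)) := by rw [h0]; exact ⟨hδ.1, hδ.2.trans hFnr⟩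
    obtain ⟨q, hq, hfq⟩ :=
      intermediate_value_Ioo' (by linarith : -r ≤ (0:ℝ)) hFcont.continuousOn this
    exact ⟨q, hq, hfq⟩
  obtain ⟨q1, hq1⟩ : ∃ q1 : ℝ → ℝ, ∀ δ ∈ Ioo (0:ℝ) δ0, q1 δ ∈ Ioo 0 r ∧ F (q1 δ) = δ :=
    ⟨fun δ => if h : δ ∈ Ioo (0:ℝ) δ0 then (ex1 δ h).choose else 0,
      fun δ h => by simp only [dif_pos h]; exact (ex1 δ h).choose_spec⟩
  obtain ⟨q2, hq2⟩ : ∃ q2 : ℝ → ℝ, ∀ δ ∈ Ioo (0:ℝ) δ0, q2 δ ∈ Ioo (-r) 0 ∧ F (q2 δ) = δ :=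
    ⟨fun δ => if h : δ ∈ Ioo (0:ℝ) δ0 then (ex2 δ h).choose else 0,
      fun δ h => by simp only [dif_pos h]; exact (ex2 δ h).choose_spec⟩
  have hmono := monoF d r hr hdr
  have hanti := antiF d r hr hdr
  -- basic bounds
  have hbd1 : ∀ δ ∈ Ioo (0:ℝ) δ0, (q1 δ)^2 ≤ 2*δ := by
    intro δ hδ
    obtain ⟨⟨h0, hrr⟩, heq⟩ := hq1 δ hδ
    have h12 : (1:ℝ)/2 ≤ 1 + d * q1 δ :=
      one_add_bd d r (q1 δ) hdr (by rw [abs_of_pos h0]; exact hrr.le)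
    have heq' : (q1 δ)^2 * (1 + d * q1 δ) = δ := heq
    nlinarith [sq_nonneg (q1 δ)]
  have hbd2 : ∀ δ ∈ Ioo (0:ℝ) δ0, (q2 δ)^2 ≤ 2*δ := by
    intro δ hδ
    obtain ⟨⟨hrr, h0⟩, heq⟩ := hq2 δ hδ
    have h12 : (1:ℝ)/2 ≤ 1 + d * q2 δ :=
      one_add_bd d r (q2 δ) hdr (by rw [abs_of_neg h0]; linarith)
    have heq' : (q2 δ)^2 * (1 + d * q2 δ) = δ := heq
    nlinarith [sq_nonneg (q2 δ)]
  have hmemIoo : Ioo (0:ℝ) δ0 ∈ nhdsWithin (0:ℝ) (Ioi 0) :=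
    Ioo_mem_nhdsGT_of_mem ⟨le_refl 0, hδ0⟩
  have hsqrt0 : Tendsto (fun δ : ℝ => Real.sqrt (2*δ)) (nhdsWithin 0 (Ioi 0)) (nhds 0) := by
    have hc : Continuous fun δ : ℝ => Real.sqrt (2*δ) := by fun_prop
    have := (hc.tendsto 0).mono_left (nhdsWithin_le_nhds (s := Ioi (0:ℝ)))
    simpa using this
  have ht1 : Tendsto q1 (nhdsWithin 0 (Ioi (0:ℝ))) (nhds 0) := by
    apply tendsto_of_tendsto_of_tendsto_of_le_of_le' tendsto_const_nhds hsqrt0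
    · filter_upwards [hmemIoo] with δ hδ
      exact ((hq1 δ hδ).1.1).le
    · filter_upwards [hmemIoo] with δ hδ
      exact Real.le_sqrt_of_sq_le (hbd1 δ hδ)
  have ht2 : Tendsto q2 (nhdsWithin 0 (Ioi (0:ℝ))) (nhds 0) := by
    have hneg : Tendsto (fun δ : ℝ => -Real.sqrt (2*δ)) (nhdsWithin 0 (Ioi 0)) (nhds 0) := by
      simpa using hsqrt0.neg
    apply tendsto_of_tendsto_of_tendsto_of_le_of_le' hneg tendsto_const_nhds
    · filter_upwards [hmemIoo] with δ hδ
      have : -q2 δ ≤ Real.sqrt (2*δ) := Real.le_sqrt_of_sq_le (by nlinarith [hbd2 δ hδ])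
      linarith
    · filter_upwards [hmemIoo] with δ hδ
      exact ((hq2 δ hδ).1.2).le
  refine ⟨δ0, hδ0, r, hr, q1, q2, ?_, ht1, ht2, ?_, ?_⟩
  · intro δ hδ
    exact ⟨(hq2 δ hδ).1.2, (hq1 δ hδ).1.1⟩
  · -- set equality
    intro δ hδ
    obtain ⟨⟨h10, h1r⟩, he1⟩ := hq1 δ hδ
    obtain ⟨⟨h2r, h20⟩, he2⟩ := hq2 δ hδ
    ext q
    simp only [mem_setOf_eq, mem_Ioo, mem_insert_iff, mem_singleton_iff]
    constructor
    · rintro ⟨⟨hql, hqr⟩, heq⟩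
      have heqF : F q = δ := heq
      rcases lt_trichotomy q 0 with h | h | h
      · right
        refine hanti.injOn ⟨hql.le, h.le⟩ ⟨by linarith, h20.le⟩ ?_
        show F q = F (q2 δ); rw [heqF, he2]
      · exfalso
        rw [h] at heq; simp at heq
        exact absurd heq.symm (ne_of_gt hδ.1)
      · left
        refine hmono.injOn ⟨h.le, hqr.le⟩ ⟨h10.le, h1r.le⟩ ?_
        show F q = F (q1 δ); rw [heqF, he1]
    · rintro (rfl | rfl)
      · exact ⟨⟨by linarith, h1r⟩, he1⟩
      · exact ⟨⟨h2r, by linarith⟩, he2⟩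
  · -- final limit
    have hG : Tendsto
        (fun p : ℝ × ℝ =>
          -d * (1/Real.sqrt (1+d*p.1) + 1/Real.sqrt (1+d*p.2)) / ((1+d*p.1)*(1+d*p.2)))
        (nhds ((0:ℝ), (0:ℝ))) (nhds (-2*d)) := by
      have hc : ContinuousAt
          (fun p : ℝ × ℝ =>
            -d * (1/Real.sqrt (1+d*p.1) + 1/Real.sqrt (1+d*p.2)) / ((1+d*p.1)*(1+d*p.2)))
          ((0:ℝ), (0:ℝ)) := by
        apply ContinuousAt.div
        · apply ContinuousAt.mul continuousAt_const
          apply ContinuousAt.add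
          · apply ContinuousAt.div continuousAt_const
            · exact (Real.continuous_sqrt.comp (by fun_prop)).continuousAt
            · simp
          · apply ContinuousAt.div continuousAt_const
            · exact (Real.continuous_sqrt.comp (by fun_prop)).continuousAt
            · simp
        · fun_prop
        · simp
      have := hc.tendsto
      simp only [mul_zero, add_zero, Real.sqrt_one] at this
      convert this using 2
      ring
    have hpair : Tendsto (fun δ => (q1 δ, q2 δ)) (nhdsWithin 0 (Ioi (0:ℝ)))
        (nhds ((0:ℝ), (0:ℝ))) := ht1.prodMk_nhds ht2
    refine Tendsto.congr' ?_ (hG.comp hpair)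
    filter_upwards [hmemIoo] with δ hδ
    obtain ⟨⟨h10, h1r⟩, he1⟩ := hq1 δ hδ
    obtain ⟨⟨h2r, h20⟩, he2⟩ := hq2 δ hδ
    have h1a : 0 < 1 + d * q1 δ := by
      have := one_add_bd d r (q1 δ) hdr (by rw [abs_of_pos h10]; exact h1r.le); linarith
    have h1b : 0 < 1 + d * q2 δ := by
      have := one_add_bd d r (q2 δ) hdr (by rw [abs_of_neg h20]; linarith); linarith
    exact (cusp_key d δ (q1 δ) (q2 δ) hδ.1 h10 h20 h1a h1b he1 he2).symm
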